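/- Let A and B be self-adjoint continuous linear operators on H and let ψ be a unit vector; set a := ⟨A⟩_ψ and b := ⟨B⟩_ψ. Then (ΔA)²_ψ · (ΔB)²_ψ ≥ (Im⟨Aψ,Bψ⟩)² + (Re⟨Aψ,Bψ⟩ − a·b)². (This is the uncertainty relation of the geometrical formulation of quantum mechanics: (ΔA)(ΔB) ≥ ((ħ/2){A,B}_Ω)² + ((A,B)_G)², where {A,B}_Ω is the symplectic Poisson bracket and (A,B)_G the Riemannian bracket of the expectation functions.) -/

import Mathlib

local notation "⟪" x ", " y "⟫_ℂ" => @inner ℂ _ _ x y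

/-- Uncertainty relation of the geometrical formulation of quantum mechanics:
`(ΔA)²·(ΔB)² ≥ (Im⟨Aψ,Bψ⟩)² + (Re⟨Aψ,Bψ⟩ − ⟨A⟩⟨B⟩)²`. -/
theorem stmt_0 {H : Type*} [NormedAddCommGroup H] [InnerProductSpace ℂ H]
    (A B : H →L[ℂ] H)
    (hA : ∀ φ ψ : H, ⟪A φ, ψ⟫_ℂ = ⟪φ, A ψ⟫_ℂ)
    (hB : ∀ φ ψ : H, ⟪B φ, ψ⟫_ℂ = ⟪φ, B ψ⟫_ℂ)
    (ψ : H) (hψ : ‖ψ‖ = 1) :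
    (‖A ψ‖ ^ 2 - (⟪ψ, A ψ⟫_ℂ.re) ^ 2) * (‖B ψ‖ ^ 2 - (⟪ψ, B ψ⟫_ℂ.re) ^ 2) ≥
      (⟪A ψ, B ψ⟫_ℂ.im) ^ 2 +
        (⟪A ψ, B ψ⟫_ℂ.re - ⟪ψ, A ψ⟫_ℂ.re * ⟪ψ, B ψ⟫_ℂ.re) ^ 2 := by
  have hψ2 : (⟪ψ, ψ⟫_ℂ) = 1 := by
    rw [inner_self_eq_norm_sq_to_K, hψ]; norm_num
  set a : ℝ := (⟪ψ, A ψ⟫_ℂ).re with ha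
  set b : ℝ := (⟪ψ, B ψ⟫_ℂ).re with hb
  have hAr : ⟪ψ, A ψ⟫_ℂ = (a : ℂ) := by
    have h1 : ⟪A ψ, ψ⟫_ℂ = ⟪ψ, A ψ⟫_ℂ := hA ψ ψ
    have h2 : (starRingEnd ℂ) ⟪ψ, A ψ⟫_ℂ = ⟪ψ, A ψ⟫_ℂ := by
      rw [inner_conj_symm]; exact h1
    have := Complex.conj_eq_iff_re.mp h2
    simpa [ha] using this.symm
  have hBr : ⟪ψ, B ψ⟫_ℂ = (b : ℂ) := by
    have h1 : ⟪B ψ, ψ⟫_ℂ = ⟪ψ, B ψ⟫_ℂ := hB ψ ψ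
    have h2 : (starRingEnd ℂ) ⟪ψ, B ψ⟫_ℂ = ⟪ψ, B ψ⟫_ℂ := by
      rw [inner_conj_symm]; exact h1
    have := Complex.conj_eq_iff_re.mp h2
    simpa [hb] using this.symm
  set x : H := A ψ - (a : ℂ) • ψ with hx
  set y : H := B ψ - (b : ℂ) • ψ with hy
  have hAψψ : ⟪A ψ, ψ⟫_ℂ = (a : ℂ) := by rw [hA ψ ψ, hAr]
  have hBψψ : ⟪B ψ, ψ⟫_ℂ = (b : ℂ) := by rw [hB ψ ψ, hBr]
  have hxy : ⟪x, y⟫_ℂ = ⟪A ψ, B ψ⟫_ℂ - (a : ℂ) * b := by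
    simp only [hx, hy, inner_sub_left, inner_sub_right, inner_smul_left, inner_smul_right,
      hψ2, hAψψ, hBψψ, hAr, hBr, Complex.conj_ofReal, mul_one]
    ring
  have hxx : ‖x‖ ^ 2 = ‖A ψ‖ ^ 2 - a ^ 2 := by
    rw [hx, @norm_sub_sq ℂ]
    simp only [inner_smul_right, hAψψ, norm_smul, hψ, mul_one]
    simp [Complex.norm_real]
    ring
  have hyy : ‖y‖ ^ 2 = ‖B ψ‖ ^ 2 - b ^ 2 := by
    rw [hy, @norm_sub_sq ℂ]
    simp only [inner_smul_right, hBψψ, norm_smul, hψ, mul_one]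
    simp [Complex.norm_real]
    ring
  have key : ‖⟪x, y⟫_ℂ‖ ≤ ‖x‖ * ‖y‖ := norm_inner_le_norm x y
  have key2 : ‖⟪x, y⟫_ℂ‖ ^ 2 ≤ (‖x‖ * ‖y‖) ^ 2 := by
    apply pow_le_pow_left₀ (norm_nonneg _) key
  have hn : ‖⟪x, y⟫_ℂ‖ ^ 2 = (⟪A ψ, B ψ⟫_ℂ.im) ^ 2 + (⟪A ψ, B ψ⟫_ℂ.re - a * b) ^ 2 := by
    rw [hxy]
    rw [Complex.sq_norm, Complex.normSq_apply]
    simp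
    ring
  rw [hn] at key2
  rw [mul_pow, hxx, hyy] at key2
  exact key2
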